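/- Let 𝓘 be a finite family of integer intervals and let M ⊆ ℤ be a finite minimal hitting set for 𝓘. Then there exists a subfamily 𝓓 ⊆ 𝓘 of pairwise disjoint intervals with |𝓓| ≥ ⌈|M|/2⌉; in particular, twice the maximum number of pairwise disjoint intervals in 𝓘 is at least |M|. -/

import Mathlib

/- **Statement 2 (Lemma: disjoint intervals vs. minimal hitting sets).**
If `M` is a minimal hitting set for a finite family `𝓘` of (nonempty) integer
intervals, then `𝓘` contains a pairwise disjoint subfamily `𝓓` with
`|𝓓| ≥ ⌈|M|/2⌉`; in particular `|M| ≤ 2|𝓓|`. -/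
theorem stmt_2 (𝓘 : Finset (Finset ℤ))
    (hI : ∀ I ∈ 𝓘, ∃ a b : ℤ, a ≤ b ∧ I = Finset.Icc a b)
    (M : Finset ℤ)
    (hhit : ∀ I ∈ 𝓘, (M ∩ I).Nonempty)
    (hmin : ∀ M' : Finset ℤ, M' ⊂ M → ¬ (∀ I ∈ 𝓘, (M' ∩ I).Nonempty)) :
    ∃ 𝓓 ⊆ 𝓘, (∀ I ∈ 𝓓, ∀ J ∈ 𝓓, I ≠ J → Disjoint I J) ∧
      (M.card + 1) / 2 ≤ 𝓓.card ∧ M.card ≤ 2 * 𝓓.card := by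
  classical
  -- For each m ∈ M there is a private interval hit only by m.
  have key : ∀ m : ℤ, ∃ I : Finset ℤ, m ∈ M →
      I ∈ 𝓘 ∧ m ∈ I ∧ ∀ x ∈ M, x ∈ I → x = m := by
    intro m
    by_cases hm : m ∈ M
    · have hsub : M.erase m ⊂ M := Finset.erase_ssubset hm
      have h := hmin (M.erase m) hsub
      push_neg at h
      obtain ⟨I, hI𝓘, hempty⟩ := h
      refine ⟨I, fun _ => ⟨hI𝓘, ?_, ?_⟩⟩
      · obtain ⟨x, hx⟩ := hhit I hI𝓘
        rw [Finset.mem_inter] at hx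
        by_contra hmI
        exact (Finset.not_nonempty_iff_eq_empty.2 hempty) ⟨x, Finset.mem_inter.2
          ⟨Finset.mem_erase.2 ⟨fun h => hmI (h ▸ hx.2), hx.1⟩, hx.2⟩⟩
      · intro x hxM hxI
        by_contra hne
        exact (Finset.not_nonempty_iff_eq_empty.2 hempty) ⟨x, Finset.mem_inter.2 ⟨Finset.mem_erase.2 ⟨hne, hxM⟩, hxI⟩⟩
    · exact ⟨∅, fun h => absurd h hm⟩
  choose f hf using key
  -- Disjointness of private intervals separated by a third point of M.
  have fdisj : ∀ m ∈ M, ∀ m' ∈ M, ∀ p ∈ M, m < p → p < m' →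
      Disjoint (f m) (f m') := by
    intro m hm m' hm' p hp h1 h2
    obtain ⟨hI1, hm1, honly1⟩ := hf m hm
    obtain ⟨hI2, hm2, honly2⟩ := hf m' hm'
    obtain ⟨a, b, hab, hIcc1⟩ := hI (f m) hI1
    obtain ⟨a', b', hab', hIcc2⟩ := hI (f m') hI2
    have hpnot1 : p ∉ f m := fun h => absurd (honly1 p hp h) (by omega)
    have hpnot2 : p ∉ f m' := fun h => absurd (honly2 p hp h) (by omega)
    rw [Finset.disjoint_left]
    intro x hx1 hx2
    rw [hIcc1, Finset.mem_Icc] at hx1 hm1 hpnot1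
    rw [hIcc2, Finset.mem_Icc] at hx2 hm2 hpnot2
    omega
  have evencard : ∀ n : ℕ,
      ((Finset.range n).filter (fun i => i % 2 = 0)).card = (n + 1) / 2 := by
    intro n
    induction n with
    | zero => simp
    | succ n ih =>
      rw [Finset.range_add_one, Finset.filter_insert]
      by_cases h : n % 2 = 0
      · rw [if_pos h, Finset.card_insert_of_notMem (by simp), ih]; omega
      · rw [if_neg h, ih]; omega
  set k := M.card with hk
  let e := M.orderIsoOfFin hk.symm
  set T : Finset (Fin k) := Finset.univ.filter (fun i => (i : ℕ) % 2 = 0) with hT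
  have hdis0 : ∀ i j : Fin k, (i : ℕ) % 2 = 0 → (j : ℕ) % 2 = 0 → i < j →
      Disjoint (f (e i)) (f (e j)) := by
    intro i j hi hj hij
    have hij' : (i : ℕ) < (j : ℕ) := hij
    have h2 : (i : ℕ) + 1 < k := by
      have := j.isLt; omega
    set p : Fin k := ⟨(i : ℕ) + 1, h2⟩ with hp
    have hip : i < p := by simp [hp, Fin.lt_def]
    have hpj : p < j := by
      simp only [hp, Fin.lt_def]
      omega
    have h1 : ((e i : ℤ)) < (e p : ℤ) := Subtype.coe_lt_coe.2 (e.strictMono hip)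
    have h2' : ((e p : ℤ)) < (e j : ℤ) := Subtype.coe_lt_coe.2 (e.strictMono hpj)
    exact fdisj (e i) (e i).2 (e j) (e j).2 (e p) (e p).2 h1 h2'
  have hdis : ∀ i ∈ T, ∀ j ∈ T, i ≠ j → Disjoint (f (e i)) (f (e j)) := by
    intro i hi j hj hne
    rw [hT, Finset.mem_filter] at hi hj
    rcases lt_or_gt_of_ne hne with h | h
    · exact hdis0 i j hi.2 hj.2 h
    · exact (hdis0 j i hj.2 hi.2 h).symm
  have hinj : Set.InjOn (fun i => f (e i)) T := by
    intro i hi j hj hEq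
    by_contra hne
    have hd := hdis i hi j hj hne
    have hmem : ((e i : ℤ)) ∈ f (e i) := (hf (e i) (e i).2).2.1
    have hEq' : f ((e i : ℤ)) = f ((e j : ℤ)) := hEq
    exact Finset.disjoint_left.1 hd hmem (hEq' ▸ hmem)
  have hTcard : T.card = (k + 1) / 2 := by
    rw [← evencard k]
    refine Finset.card_bij (fun (i : Fin k) _ => (i : ℕ)) ?_ ?_ ?_
    · intro a ha
      rw [hT, Finset.mem_filter] at ha
      simp only [Finset.mem_filter, Finset.mem_range]
      exact ⟨a.isLt, ha.2⟩
    · intro a _ b _ hab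
      exact Fin.val_injective hab
    · intro b hb
      simp only [Finset.mem_filter, Finset.mem_range] at hb
      exact ⟨⟨b, hb.1⟩, by rw [hT, Finset.mem_filter]; exact ⟨Finset.mem_univ _, hb.2⟩, rfl⟩
  refine ⟨T.image (fun i => f (e i)), ?_, ?_, ?_, ?_⟩
  · intro I hImem
    obtain ⟨i, hi, rfl⟩ := Finset.mem_image.1 hImem
    exact (hf (e i) (e i).2).1
  · intro I hImem J hJmem hne
    obtain ⟨i, hi, rfl⟩ := Finset.mem_image.1 hImem
    obtain ⟨j, hj, rfl⟩ := Finset.mem_image.1 hJmem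
    exact hdis i hi j hj (fun h => hne (by rw [h]))
  · rw [Finset.card_image_of_injOn hinj, hTcard]
  · rw [Finset.card_image_of_injOn hinj, hTcard]; omega
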